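/- arXiv:2211.05890 — 2 statements merged into one kernel-verified Lean document; each statement's English description precedes it below -/
import Mathlib

section
/- Let k : [0,∞) → ℝ≥0 be a point-pair kernel on the hyperbolic plane with k supported in hyperbolic balls of radius ρ₀, and k_R the normalized indicator of the ball of radius R. Then for all z, w with hyperbolic distance conventions as above and 0 < ρ₀ < R: vol(B_{R−ρ₀})/vol(B_R) · (k_{R−ρ₀} ∗ k_{ρ₀})(z,w) ≤ k_R(z,w) ≤ vol(B_{R+ρ₀})/vol(B_R) · (k_{R+ρ₀} ∗ k_{ρ₀})(z,w), where vol(B_r) = 4π sinh²(r/2). -/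
open UpperHalfPlane MeasureTheory Real

noncomputable instance : MeasurableSpace UpperHalfPlane := borel UpperHalfPlane

instance : BorelSpace UpperHalfPlane := ⟨rfl⟩

/-- The hyperbolic measure `dμ(z) = y⁻² dx dy` on the upper half-plane, obtained by pulling
back Lebesgue measure on `ℂ` with density `Im(w)⁻²` along the inclusion `ℍ ↪ ℂ`. -/
noncomputable def hypMeasure : Measure UpperHalfPlane :=
  Measure.comap (fun z : UpperHalfPlane => (z : ℂ))
    ((volume : Measure ℂ).withDensity fun w => ENNReal.ofReal (1 / w.im ^ 2))

/-- The hyperbolic volume of a ball of radius `r`: `vol(B_r) = 4π sinh²(r/2)`. -/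
noncomputable def ballVol (r : ℝ) : ℝ := 4 * π * Real.sinh (r / 2) ^ 2

/-- `k_r(z,w) = vol(B_r)⁻¹ · 1[ρ(z,w) ≤ r]`, the normalised indicator of the hyperbolic
ball of radius `r`. -/
noncomputable def ballKernel (r : ℝ) (z w : UpperHalfPlane) : ℝ :=
  if dist z w ≤ r then (ballVol r)⁻¹ else 0

/-- The hyperbolic convolution `(k ∗ k')(z,w) = ∫_H k(z,ζ) k'(ζ,w) dμ(ζ)`. -/
noncomputable def ballConv (r r' : ℝ) (z w : UpperHalfPlane) : ℝ :=
  ∫ ζ, ballKernel r z ζ * ballKernel r' ζ w ∂hypMeasure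

lemma ftc_key (a b : ℝ) (ha : 0 < a) (hab : a < b) :
    ∫ y in (b-a)..(b+a), 1 / y ^ 2 * (2 * Real.sqrt (a ^ 2 - (y - b) ^ 2)) =
      2 * π * (b / Real.sqrt (b ^ 2 - a ^ 2) - 1) := by
  have hD : 0 < b ^ 2 - a ^ 2 := by nlinarith
  set d := Real.sqrt (b ^ 2 - a ^ 2) with hd
  have hd0 : 0 < d := Real.sqrt_pos.2 hD
  have hdd : d ^ 2 = b ^ 2 - a ^ 2 := Real.sq_sqrt hD.le
  set c := b / d with hc
  set F : ℝ → ℝ := fun y =>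
    -2 * (Real.sqrt (a ^ 2 - (y - b) ^ 2) / y) - 2 * Real.arcsin ((y - b) / a)
      + 2 * c * Real.arcsin ((b * (y - b) + a ^ 2) / (a * y)) with hF
  have hle : b - a ≤ b + a := by linarith
  have hy0 : ∀ y ∈ Set.Icc (b-a) (b+a), y ≠ 0 := fun y hy => by
    have := hy.1; intro h; rw [h] at this; linarith
  have hcont : ContinuousOn F (Set.Icc (b-a) (b+a)) := by
    apply ContinuousOn.add
    apply ContinuousOn.sub
    · exact continuousOn_const.mul
        (((Real.continuous_sqrt.comp (by fun_prop)).continuousOn).div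
          continuousOn_id hy0)
    · exact continuousOn_const.mul
        ((Real.continuous_arcsin.comp (by fun_prop)).continuousOn)
    · refine continuousOn_const.mul (Real.continuous_arcsin.comp_continuousOn ?_)
      exact (by fun_prop : Continuous fun y : ℝ => b * (y - b) + a ^ 2).continuousOn.div
        (by fun_prop) (fun y hy => mul_ne_zero ha.ne' (hy0 y hy))
  have hderiv : ∀ x ∈ Set.Ioo (b-a) (b+a),
      HasDerivAt F (1 / x ^ 2 * (2 * Real.sqrt (a ^ 2 - (x - b) ^ 2))) x := by
    intro x hx
    have hx0 : 0 < x := by have := hx.1; linarith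
    have hS : 0 < a ^ 2 - (x - b) ^ 2 := by nlinarith [hx.1, hx.2]
    set s := Real.sqrt (a ^ 2 - (x - b) ^ 2) with hs
    have hs0 : 0 < s := Real.sqrt_pos.2 hS
    have hss : s ^ 2 = a ^ 2 - (x - b) ^ 2 := Real.sq_sqrt hS.le
    -- inner polynomial derivative
    have hinner : HasDerivAt (fun y : ℝ => a ^ 2 - (y - b) ^ 2) (0 - 2 * (x - b) ^ 1 * 1) x := by
      exact (hasDerivAt_const x (a ^ 2)).sub (((hasDerivAt_id x).sub_const b).pow 2)
    have hsq : HasDerivAt (fun y : ℝ => Real.sqrt (a ^ 2 - (y - b) ^ 2))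
        (1 / (2 * s) * (0 - 2 * (x - b) ^ 1 * 1)) x :=
      (Real.hasDerivAt_sqrt hS.ne').comp x hinner
    have hT1 : HasDerivAt (fun y : ℝ => -2 * (Real.sqrt (a ^ 2 - (y - b) ^ 2) / y))
        (-2 * ((1 / (2 * s) * (0 - 2 * (x - b) ^ 1 * 1) * x - s * 1) / x ^ 2)) x :=
      (hsq.div (hasDerivAt_id x) hx0.ne').const_mul (-2)
    -- T2
    have hr1 : (x - b) / a < 1 := (div_lt_one ha).2 (by linarith [hx.2])
    have hr2 : -1 < (x - b) / a := by
      rw [lt_div_iff₀ ha]; linarith [hx.1]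
    have hT2i : HasDerivAt (fun y : ℝ => (y - b) / a) (1 / a) x := by
      simpa using ((hasDerivAt_id x).sub_const b).div_const a
    have hT2 : HasDerivAt (fun y : ℝ => 2 * Real.arcsin ((y - b) / a))
        (2 * (1 / Real.sqrt (1 - ((x - b) / a) ^ 2) * (1 / a))) x :=
      by have := (((Real.hasDerivAt_arcsin hr2.ne' hr1.ne).comp x hT2i)).const_mul 2; exact this
    -- T3
    have hax : a * x ≠ 0 := mul_ne_zero ha.ne' hx0.ne'
    set g : ℝ → ℝ := fun y => (b * (y - b) + a ^ 2) / (a * y) with hg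
    have hgx : g x = (b * (x - b) + a ^ 2) / (a * x) := rfl
    have hid : 1 - g x ^ 2 = (b ^ 2 - a ^ 2) * (a ^ 2 - (x - b) ^ 2) / (a * x) ^ 2 := by
      rw [hgx]; field_simp; ring
    have hg2 : 1 - g x ^ 2 = (d * s / (a * x)) ^ 2 := by
      have h' : (d * s / (a * x)) ^ 2 = (b ^ 2 - a ^ 2) * (a ^ 2 - (x - b) ^ 2) / (a * x) ^ 2 := by
        rw [div_pow, mul_pow, hdd, hss]
      rw [hid, h']
    have hq0 : 0 < d * s / (a * x) := div_pos (mul_pos hd0 hs0) (mul_pos ha hx0)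
    have hsqlt : g x ^ 2 < 1 := by nlinarith [hg2, pow_pos hq0 2]
    have habs := abs_lt.1 ((sq_lt_one_iff_abs_lt_one (a := g x)).1 hsqlt)
    have hglt : g x < 1 := habs.2
    have hggt : -1 < g x := habs.1
    have hnum : HasDerivAt (fun y : ℝ => b * (y - b) + a ^ 2) (b * 1) x :=
      (((hasDerivAt_id x).sub_const b).const_mul b).add_const (a ^ 2)
    have hden : HasDerivAt (fun y : ℝ => a * y) (a * 1) x := (hasDerivAt_id x).const_mul a
    have hgder : HasDerivAt g ((b * 1 * (a * x) - (b * (x - b) + a ^ 2) * (a * 1)) / (a * x) ^ 2) x :=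
      hnum.div hden hax
    have hT3 : HasDerivAt (fun y : ℝ => 2 * c * Real.arcsin (g y))
        (2 * c * (1 / Real.sqrt (1 - g x ^ 2) *
          ((b * 1 * (a * x) - (b * (x - b) + a ^ 2) * (a * 1)) / (a * x) ^ 2))) x :=
      ((Real.hasDerivAt_arcsin hggt.ne' hglt.ne).comp x hgder).const_mul (2 * c)
    have hFd := (hT1.sub hT2).add hT3
    -- now rewrite the sqrt subterms and show the value matches
    have e1 : Real.sqrt (1 - ((x - b) / a) ^ 2) = s / a := by
      have : 1 - ((x - b) / a) ^ 2 = (s / a) ^ 2 := by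
        rw [div_pow, div_pow, hss]; field_simp
      rw [this, Real.sqrt_sq (by positivity)]
    have e2 : Real.sqrt (1 - g x ^ 2) = d * s / (a * x) := by
      rw [hg2, Real.sqrt_sq (by positivity)]
    rw [e1, e2] at hFd
    convert hFd using 1
    · rfl
    · rfl
    · rfl
    rw [hc]
    field_simp
    linear_combination (2 * x * b) * hdd
  have hint : IntervalIntegrable (fun y : ℝ => 1 / y ^ 2 * (2 * Real.sqrt (a ^ 2 - (y - b) ^ 2)))
      volume (b - a) (b + a) := by
    apply ContinuousOn.intervalIntegrable
    rw [Set.uIcc_of_le hle]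
    exact (continuousOn_const.div (by fun_prop) (fun y hy => pow_ne_zero 2 (hy0 y hy))).mul
      (by fun_prop)
  have := intervalIntegral.integral_eq_sub_of_hasDeriv_right_of_le hle hcont
    (fun x hx => (hderiv x hx).hasDerivWithinAt) hint
  rw [this]
  have hFa : F (b + a) = -π + c * π := by
    rw [hF]
    simp only
    have h1 : a ^ 2 - (b + a - b) ^ 2 = 0 := by ring
    have h2 : (b + a - b) / a = 1 := by field_simp; ring
    have h3 : (b * (b + a - b) + a ^ 2) / (a * (b + a)) = 1 := by
      rw [div_eq_one_iff_eq (by nlinarith)]; ring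
    rw [h1, h2, h3, Real.sqrt_zero, Real.arcsin_one]
    ring
  have hFb : F (b - a) = π - c * π := by
    rw [hF]
    simp only
    have h1 : a ^ 2 - (b - a - b) ^ 2 = 0 := by ring
    have h2 : (b - a - b) / a = -1 := by field_simp; ring
    have h3 : (b * (b - a - b) + a ^ 2) / (a * (b - a)) = -1 := by
      rw [div_eq_iff (by nlinarith)]; ring
    rw [h1, h2, h3, Real.sqrt_zero, Real.arcsin_neg_one]
    ring
  rw [hFa, hFb, hc]
  ring

lemma slice_vol (c t : ℝ) :
    volume {x : ℝ | (x - c) ^ 2 ≤ t} = ENNReal.ofReal (2 * Real.sqrt t) := by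
  rcases le_or_gt 0 t with h | h
  · have hset : {x : ℝ | (x - c) ^ 2 ≤ t} = Set.Icc (c - Real.sqrt t) (c + Real.sqrt t) := by
      ext x
      simp only [Set.mem_setOf_eq, Set.mem_Icc]
      have hst := Real.sq_sqrt h
      constructor
      · intro hx
        have h1 : |x - c| ≤ Real.sqrt t := by
          rw [← Real.sqrt_sq_eq_abs]; exact Real.sqrt_le_sqrt hx
        rw [abs_le] at h1
        exact ⟨by linarith [h1.1], by linarith [h1.2]⟩
      · intro hx
        nlinarith [hx.1, hx.2]
    rw [hset, Real.volume_Icc]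
    congr 1; ring
  · have hset : {x : ℝ | (x - c) ^ 2 ≤ t} = ∅ := by
      ext x
      simp only [Set.mem_setOf_eq, Set.mem_empty_iff_false, iff_false, not_le]
      nlinarith [sq_nonneg (x - c)]
    rw [hset, measure_empty, Real.sqrt_eq_zero_of_nonpos h.le, mul_zero, ENNReal.ofReal_zero]

lemma coe_measurableEmbedding : MeasurableEmbedding ((↑) : UpperHalfPlane → ℂ) :=
  UpperHalfPlane.isOpenEmbedding_coe.measurableEmbedding

lemma image_closedBall (w : UpperHalfPlane) (r : ℝ) :
    ((↑) : UpperHalfPlane → ℂ) '' Metric.closedBall w r =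
      Metric.closedBall ((w.center r : UpperHalfPlane) : ℂ) (w.im * Real.sinh r) := by
  ext ζ
  constructor
  · rintro ⟨ξ, hξ, rfl⟩
    rw [Metric.mem_closedBall] at hξ ⊢
    exact UpperHalfPlane.dist_le_iff_dist_coe_center_le.1 hξ
  · intro hζ
    rw [Metric.mem_closedBall] at hζ
    have him : 0 < ζ.im := by
      have h1 : |(ζ - ((w.center r : UpperHalfPlane) : ℂ)).im| ≤
          ‖ζ - ((w.center r : UpperHalfPlane) : ℂ)‖ := Complex.abs_im_le_norm _
      rw [Complex.sub_im] at h1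
      have h2 : dist ζ ((w.center r : UpperHalfPlane) : ℂ) =
          ‖ζ - _‖ := Complex.dist_eq _ _
      have h3 : ((w.center r : UpperHalfPlane) : ℂ).im = w.im * Real.cosh r := w.center_im r
      have h4 : w.im * Real.cosh r - w.im * Real.sinh r = w.im * Real.exp (-r) := by
        rw [← Real.cosh_sub_sinh]; ring
      have h5 : 0 < w.im * Real.exp (-r) := mul_pos w.im_pos (Real.exp_pos _)
      have := abs_le.1 h1
      rw [← h2] at this
      nlinarith [this.1, this.2, hζ]
    refine ⟨⟨ζ, him⟩, ?_, rfl⟩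
    rw [Metric.mem_closedBall]
    exact UpperHalfPlane.dist_le_iff_dist_coe_center_le.2 hζ

set_option maxHeartbeats 2000000 in
lemma hyp_ball_vol (w : UpperHalfPlane) (r : ℝ) (hr : 0 < r) :
    hypMeasure (Metric.closedBall w r) = ENNReal.ofReal (ballVol r) := by
  set t : ℝ := w.im with ht
  have ht0 : 0 < t := w.im_pos
  set a : ℝ := t * Real.sinh r with ha'
  set b : ℝ := t * Real.cosh r with hb'
  have ha : 0 < a := mul_pos ht0 (Real.sinh_pos_iff.2 hr)
  have hab : a < b := by
    have := Real.sinh_lt_cosh r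
    nlinarith
  set cc : ℂ := ((w.center r : UpperHalfPlane) : ℂ) with hcc
  have hccim : cc.im = b := w.center_im r
  have hccre : cc.re = w.re := w.center_re r
  rw [hypMeasure, coe_measurableEmbedding.comap_apply, image_closedBall,
    withDensity_apply _ measurableSet_closedBall]
  -- now a set lintegral over ℂ
  rw [← lintegral_indicator measurableSet_closedBall]
  have hmp := (Complex.volume_preserving_equiv_real_prod.symm Complex.measurableEquivRealProd)
  have hmeas : Measurable fun z : ℂ =>
      (Metric.closedBall cc (t * Real.sinh r)).indicator
        (fun z : ℂ => ENNReal.ofReal (1 / z.im ^ 2)) z := by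
    exact Measurable.indicator (by measurability) measurableSet_closedBall
  rw [← hmp.lintegral_comp hmeas]
  have hpt : ∀ p : ℝ × ℝ,
      (Metric.closedBall cc (t * Real.sinh r)).indicator
        (fun z : ℂ => ENNReal.ofReal (1 / z.im ^ 2)) (Complex.measurableEquivRealProd.symm p)
      = (if (p.1 - w.re) ^ 2 + (p.2 - b) ^ 2 ≤ a ^ 2 then ENNReal.ofReal (1 / p.2 ^ 2) else 0) := by
    intro p
    have hsymm : Complex.measurableEquivRealProd.symm p = Complex.mk p.1 p.2 :=
      Complex.measurableEquivRealProd_symm_apply p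
    have hmem : Complex.measurableEquivRealProd.symm p ∈ Metric.closedBall cc (t * Real.sinh r)
        ↔ (p.1 - w.re) ^ 2 + (p.2 - b) ^ 2 ≤ a ^ 2 := by
      rw [Metric.mem_closedBall, hsymm, Complex.dist_eq_re_im]
      rw [show (Complex.mk p.1 p.2).re = p.1 from rfl, show (Complex.mk p.1 p.2).im = p.2 from rfl,
        hccre, hccim]
      rw [← ha']
      constructor
      · intro h
        have := Real.sq_sqrt (by positivity : (0:ℝ) ≤ (p.1 - w.re) ^ 2 + (p.2 - b) ^ 2)
        nlinarith [ha.le, Real.sqrt_nonneg ((p.1 - w.re) ^ 2 + (p.2 - b) ^ 2), h]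
      · intro h
        rw [show a = Real.sqrt (a ^ 2) from (Real.sqrt_sq ha.le).symm]
        exact Real.sqrt_le_sqrt h
    by_cases hin : Complex.measurableEquivRealProd.symm p ∈ Metric.closedBall cc (t * Real.sinh r)
    · rw [Set.indicator_of_mem hin, if_pos (hmem.1 hin), hsymm]
    · rw [Set.indicator_of_notMem hin, if_neg (fun h => hin (hmem.2 h))]
  rw [lintegral_congr hpt]
  rw [MeasureTheory.Measure.volume_eq_prod, MeasureTheory.lintegral_prod_symm]
  · -- inner integral over x
    have hinner : ∀ y : ℝ,
        (∫⁻ x : ℝ, (if (x - w.re) ^ 2 + (y - b) ^ 2 ≤ a ^ 2 then ENNReal.ofReal (1 / y ^ 2) else 0))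
        = ENNReal.ofReal (1 / y ^ 2 * (2 * Real.sqrt (a ^ 2 - (y - b) ^ 2))) := by
      intro y
      have hset : ∀ x : ℝ, ((x - w.re) ^ 2 + (y - b) ^ 2 ≤ a ^ 2) ↔
          x ∈ {x : ℝ | (x - w.re) ^ 2 ≤ a ^ 2 - (y - b) ^ 2} := by
        intro x; simp only [Set.mem_setOf_eq]; constructor <;> intro <;> linarith
      have : ∀ x : ℝ, (if (x - w.re) ^ 2 + (y - b) ^ 2 ≤ a ^ 2 then ENNReal.ofReal (1 / y ^ 2) else 0)
          = {x : ℝ | (x - w.re) ^ 2 ≤ a ^ 2 - (y - b) ^ 2}.indicator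
              (fun _ => ENNReal.ofReal (1 / y ^ 2)) x := by
        intro x
        rw [Set.indicator_apply, if_congr (hset x) rfl rfl]
      rw [lintegral_congr this, lintegral_indicator_const, slice_vol,
        ← ENNReal.ofReal_mul (by positivity)]
      · exact measurableSet_le (by measurability) measurable_const
    rw [lintegral_congr fun y => hinner y]
    -- outer integral
    have hnn : ∀ y : ℝ, 0 ≤ 1 / y ^ 2 * (2 * Real.sqrt (a ^ 2 - (y - b) ^ 2)) := by
      intro y; positivity
    have hsupp : (fun y : ℝ => 1 / y ^ 2 * (2 * Real.sqrt (a ^ 2 - (y - b) ^ 2)))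
        = (Set.Icc (b - a) (b + a)).indicator
            (fun y : ℝ => 1 / y ^ 2 * (2 * Real.sqrt (a ^ 2 - (y - b) ^ 2))) := by
      funext y
      rw [Set.indicator_apply]
      split_ifs with h
      · rfl
      · have : a ^ 2 - (y - b) ^ 2 ≤ 0 := by
          rw [Set.mem_Icc, not_and_or, not_le, not_le] at h
          rcases h with h | h <;> nlinarith
        rw [Real.sqrt_eq_zero_of_nonpos this, mul_zero, mul_zero]
    have hcont : ContinuousOn (fun y : ℝ => 1 / y ^ 2 * (2 * Real.sqrt (a ^ 2 - (y - b) ^ 2)))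
        (Set.Icc (b - a) (b + a)) := by
      have hy0 : ∀ y ∈ Set.Icc (b - a) (b + a), y ^ 2 ≠ 0 := by
        intro y hy
        have := hy.1
        have : y ≠ 0 := by intro hh; rw [hh] at this; linarith
        positivity
      exact (continuousOn_const.div (by fun_prop) hy0).mul (by fun_prop)
    have hintg : Integrable (fun y : ℝ => 1 / y ^ 2 * (2 * Real.sqrt (a ^ 2 - (y - b) ^ 2))) := by
      rw [hsupp]
      rw [integrable_indicator_iff measurableSet_Icc]
      exact hcont.integrableOn_compact isCompact_Icc
    rw [← MeasureTheory.ofReal_integral_eq_lintegral_ofReal hintg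
      (Filter.Eventually.of_forall hnn)]
    congr 1
    rw [hsupp, integral_indicator measurableSet_Icc, MeasureTheory.integral_Icc_eq_integral_Ioc,
      ← intervalIntegral.integral_of_le (by linarith)]
    rw [ftc_key a b ha hab]
    have hba : b ^ 2 - a ^ 2 = t ^ 2 := by
      have := Real.cosh_sq_sub_sinh_sq r
      rw [ha', hb']; nlinarith
    rw [hba, Real.sqrt_sq ht0.le, hb']
    rw [ballVol]
    have hch : Real.cosh r = 2 * Real.sinh (r / 2) ^ 2 + 1 := by
      have h1 : Real.cosh (2 * (r / 2)) = Real.cosh (r / 2) ^ 2 + Real.sinh (r / 2) ^ 2 :=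
        Real.cosh_two_mul (r / 2)
      have h2 : Real.cosh (r / 2) ^ 2 - Real.sinh (r / 2) ^ 2 = 1 :=
        Real.cosh_sq_sub_sinh_sq (r / 2)
      calc Real.cosh r = Real.cosh (2 * (r / 2)) := by congr 1; ring
        _ = 2 * Real.sinh (r / 2) ^ 2 + 1 := by rw [h1]; linarith
    have hdiv : t * Real.cosh r / t = Real.cosh r := mul_div_cancel_left₀ _ ht0.ne'
    rw [hdiv, hch]
    ring
  · -- AEMeasurable for lintegral_prod_symm
    apply Measurable.aemeasurable
    apply Measurable.ite
    · exact measurableSet_le (by measurability) (by measurability)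
    · measurability
    · measurability

lemma ballVol_nonneg (r : ℝ) : 0 ≤ ballVol r := by
  rw [ballVol]; positivity

lemma ballVol_pos {r : ℝ} (hr : 0 < r) : 0 < ballVol r := by
  rw [ballVol]
  have : 0 < Real.sinh (r / 2) := Real.sinh_pos_iff.2 (by linarith)
  positivity

lemma ballKernel_nonneg (r : ℝ) (z w : UpperHalfPlane) : 0 ≤ ballKernel r z w := by
  rw [ballKernel]
  split_ifs
  · exact inv_nonneg.2 (ballVol_nonneg r)
  · exact le_refl 0

lemma ballKernel_le (r : ℝ) (z w : UpperHalfPlane) : ballKernel r z w ≤ (ballVol r)⁻¹ := by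
  rw [ballKernel]
  split_ifs
  · exact le_refl _
  · exact inv_nonneg.2 (ballVol_nonneg r)

lemma integral_indicator_ball (w : UpperHalfPlane) {ρ : ℝ} (hρ : 0 < ρ) (cst : ℝ) :
    ∫ ζ, (Metric.closedBall w ρ).indicator (fun _ => cst) ζ ∂hypMeasure = cst * ballVol ρ := by
  rw [integral_indicator measurableSet_closedBall, setIntegral_const, measureReal_def, hyp_ball_vol w ρ hρ,
    ENNReal.toReal_ofReal (ballVol_nonneg ρ)]
  rw [smul_eq_mul, mul_comm]

lemma integrable_indicator_ball (w : UpperHalfPlane) {ρ : ℝ} (hρ : 0 < ρ) (cst : ℝ) :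
    Integrable ((Metric.closedBall w ρ).indicator (fun _ => cst)) hypMeasure := by
  rw [integrable_indicator_iff measurableSet_closedBall]
  exact integrableOn_const (by rw [hyp_ball_vol w ρ hρ]; exact ENNReal.ofReal_ne_top)


/-- For `0 < ρ₀ < R` and all `z, w` in the upper half-plane:
`vol(B_{R-ρ₀})/vol(B_R) · (k_{R-ρ₀} ∗ k_{ρ₀})(z,w) ≤ k_R(z,w)
  ≤ vol(B_{R+ρ₀})/vol(B_R) · (k_{R+ρ₀} ∗ k_{ρ₀})(z,w)`,
where `vol(B_r) = 4π sinh²(r/2)`. -/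
theorem stmt7 (R ρ₀ : ℝ) (h₀ : 0 < ρ₀) (hR : ρ₀ < R) (z w : UpperHalfPlane) :
    ballVol (R - ρ₀) / ballVol R * ballConv (R - ρ₀) ρ₀ z w ≤ ballKernel R z w ∧
      ballKernel R z w ≤ ballVol (R + ρ₀) / ballVol R * ballConv (R + ρ₀) ρ₀ z w := by
  have hVm : 0 < ballVol (R - ρ₀) := ballVol_pos (by linarith)
  have hVR : 0 < ballVol R := ballVol_pos (by linarith)
  have hVp : 0 < ballVol (R + ρ₀) := ballVol_pos (by linarith)
  have hU : 0 < ballVol ρ₀ := ballVol_pos h₀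
  constructor
  · -- lower bound
    by_cases hzw : dist z w ≤ R
    · have hconv_le : ballConv (R - ρ₀) ρ₀ z w ≤ (ballVol (R - ρ₀))⁻¹ := by
        have hmono : ∀ ζ, ballKernel (R - ρ₀) z ζ * ballKernel ρ₀ ζ w ≤
            (Metric.closedBall w ρ₀).indicator
              (fun _ => (ballVol (R - ρ₀))⁻¹ * (ballVol ρ₀)⁻¹) ζ := by
          intro ζ
          by_cases h : ζ ∈ Metric.closedBall w ρ₀
          · rw [Set.indicator_of_mem h]
            rw [Metric.mem_closedBall] at h
            have h2 : ballKernel ρ₀ ζ w = (ballVol ρ₀)⁻¹ := if_pos h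
            rw [h2]
            exact mul_le_mul_of_nonneg_right (ballKernel_le _ _ _) (inv_nonneg.2 hU.le)
          · rw [Set.indicator_of_notMem h]
            rw [Metric.mem_closedBall] at h
            have h2 : ballKernel ρ₀ ζ w = 0 := if_neg h
            rw [h2, mul_zero]
        have := integral_mono_of_nonneg
          (Filter.Eventually.of_forall fun ζ =>
            mul_nonneg (ballKernel_nonneg _ _ _) (ballKernel_nonneg _ _ _))
          (integrable_indicator_ball w h₀ _)
          (Filter.Eventually.of_forall hmono)
        rw [ballConv]
        calc ∫ ζ, ballKernel (R - ρ₀) z ζ * ballKernel ρ₀ ζ w ∂hypMeasure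
            ≤ ∫ ζ, (Metric.closedBall w ρ₀).indicator
                (fun _ => (ballVol (R - ρ₀))⁻¹ * (ballVol ρ₀)⁻¹) ζ ∂hypMeasure := this
          _ = (ballVol (R - ρ₀))⁻¹ * (ballVol ρ₀)⁻¹ * ballVol ρ₀ :=
              integral_indicator_ball w h₀ _
          _ = (ballVol (R - ρ₀))⁻¹ := by field_simp
      have hk : ballKernel R z w = (ballVol R)⁻¹ := if_pos hzw
      rw [hk]
      calc ballVol (R - ρ₀) / ballVol R * ballConv (R - ρ₀) ρ₀ z w
          ≤ ballVol (R - ρ₀) / ballVol R * (ballVol (R - ρ₀))⁻¹ :=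
            mul_le_mul_of_nonneg_left hconv_le (by positivity)
        _ = (ballVol R)⁻¹ := by field_simp
    · have hzero : ballConv (R - ρ₀) ρ₀ z w = 0 := by
        rw [ballConv]
        rw [show (fun ζ => ballKernel (R - ρ₀) z ζ * ballKernel ρ₀ ζ w) = fun _ => (0:ℝ) from
          funext fun ζ => by
            rw [ballKernel, ballKernel]
            split_ifs with h1 h2
            · exfalso
              exact hzw (le_trans (dist_triangle z ζ w) (by linarith))
            · ring
            · ring
            · ring]
        exact integral_zero _ _
      rw [hzero, mul_zero, ballKernel, if_neg hzw]
  · -- upper bound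
    by_cases hzw : dist z w ≤ R
    · have hconv_eq : ballConv (R + ρ₀) ρ₀ z w = (ballVol (R + ρ₀))⁻¹ := by
        rw [ballConv]
        rw [show (fun ζ => ballKernel (R + ρ₀) z ζ * ballKernel ρ₀ ζ w) =
            (Metric.closedBall w ρ₀).indicator
              (fun _ => (ballVol (R + ρ₀))⁻¹ * (ballVol ρ₀)⁻¹) from
          funext fun ζ => by
            by_cases h : ζ ∈ Metric.closedBall w ρ₀
            · rw [Set.indicator_of_mem h]
              rw [Metric.mem_closedBall] at h
              have h1 : ballKernel (R + ρ₀) z ζ = (ballVol (R + ρ₀))⁻¹ := by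
                apply if_pos
                calc dist z ζ ≤ dist z w + dist w ζ := dist_triangle z w ζ
                  _ = dist z w + dist ζ w := by rw [dist_comm w ζ]
                  _ ≤ R + ρ₀ := by linarith
              have h2 : ballKernel ρ₀ ζ w = (ballVol ρ₀)⁻¹ := if_pos h
              rw [h1, h2]
            · rw [Set.indicator_of_notMem h]
              rw [Metric.mem_closedBall] at h
              have h2 : ballKernel ρ₀ ζ w = 0 := if_neg h
              rw [h2, mul_zero]]
        rw [integral_indicator_ball w h₀ _]
        field_simp
      rw [hconv_eq, ballKernel, if_pos hzw]
      rw [show ballVol (R + ρ₀) / ballVol R * (ballVol (R + ρ₀))⁻¹ = (ballVol R)⁻¹ by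
        field_simp]
    · rw [ballKernel, if_neg hzw]
      apply mul_nonneg (by positivity)
      exact integral_nonneg fun ζ =>
        mul_nonneg (ballKernel_nonneg _ _ _) (ballKernel_nonneg _ _ _)
end

section
/- Let q be prime and let a_i/b_i, a_{i+1}/b_{i+1} be consecutive Farey fractions with a_{i+1}b_i − a_i b_{i+1} = 1 and q ∤ b_{i+1}. Choose v ∈ {1,…,q−1} with v·b_{i+1} ≡ b_i (mod q), and let W_q = [[0, −1/√q],[√q, 0]]. Then the matrix γ = [[a_{i+1}v − a_i, (b_{i+1}v − b_i)/q], [a_{i+1}q, b_{i+1}]] lies in Γ₀(q), and γ·W_q maps a_{i+1}/b_{i+1} to ∞ and a_i/b_i to v/q under the Möbius action. -/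
/-- Let `q` be prime and `a₁/b₁ < a₂/b₂` consecutive Farey fractions
(positive denominators) with `a₂b₁ - a₁b₂ = 1` and `q ∤ b₂`.  Choose `v ∈ {1, …, q-1}` with
`v·b₂ ≡ b₁ (mod q)`, and let `W_q = [[0, -1/√q], [√q, 0]]`.  Then the matrix
`γ = [[a₂v - a₁, (b₂v - b₁)/q], [a₂q, b₂]]` lies in `Γ₀(q)` (it is integral with
determinant `1` and lower-left entry divisible by `q`), and under the Möbius action,
`γ·W_q` maps `a₂/b₂` to `∞` (its denominator vanishes there) and maps `a₁/b₁` to `v/q`. -/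
theorem stmt10 (q : ℕ) (hq : q.Prime) (v a₁ b₁ a₂ b₂ : ℤ)
    (hb₁ : 0 < b₁) (hb₂ : 0 < b₂) (hlt : a₁ * b₂ < a₂ * b₁)
    (hFarey : a₂ * b₁ - a₁ * b₂ = 1) (hndvd : ¬ (q : ℤ) ∣ b₂)
    (hv₁ : 1 ≤ v) (hv₂ : v ≤ (q : ℤ) - 1) (hmod : (q : ℤ) ∣ (v * b₂ - b₁)) :
    (!![a₂ * v - a₁, (v * b₂ - b₁) / q; a₂ * q, b₂] : Matrix (Fin 2) (Fin 2) ℤ).det = 1 ∧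
      (q : ℤ) ∣ (!![a₂ * v - a₁, (v * b₂ - b₁) / q; a₂ * q, b₂] :
          Matrix (Fin 2) (Fin 2) ℤ) 1 0 ∧
      (let M : Matrix (Fin 2) (Fin 2) ℝ :=
        ((!![a₂ * v - a₁, (v * b₂ - b₁) / q; a₂ * q, b₂] :
            Matrix (Fin 2) (Fin 2) ℤ).map (Int.cast : ℤ → ℝ)) *
          !![0, -(Real.sqrt q)⁻¹; Real.sqrt q, 0];
        M 1 0 * ((a₂ : ℝ) / (b₂ : ℝ)) + M 1 1 = 0 ∧
          (M 0 0 * ((a₁ : ℝ) / (b₁ : ℝ)) + M 0 1) /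
              (M 1 0 * ((a₁ : ℝ) / (b₁ : ℝ)) + M 1 1) = (v : ℝ) / (q : ℝ)) := by
  obtain ⟨c, hc⟩ := hmod
  have hq0 : (0:ℤ) < (q:ℤ) := by exact_mod_cast hq.pos
  have hdiv : (v * b₂ - b₁) / (q:ℤ) = c := by
    rw [hc]; exact Int.mul_ediv_cancel_left _ (ne_of_gt hq0)
  have hqR : (0:ℝ) < (q:ℝ) := by exact_mod_cast hq0
  set s := Real.sqrt q with hs_def
  have hs : 0 < s := Real.sqrt_pos.mpr hqR
  have hs2 : s * s = (q:ℝ) := Real.mul_self_sqrt hqR.le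
  have hb₁R : (b₁:ℝ) ≠ 0 := by exact_mod_cast hb₁.ne'
  have hb₂R : (b₂:ℝ) ≠ 0 := by exact_mod_cast hb₂.ne'
  have hcR : (v:ℝ) * b₂ - b₁ = (q:ℝ) * c := by exact_mod_cast hc
  have hF : (a₂:ℝ) * b₁ - a₁ * b₂ = 1 := by exact_mod_cast hFarey
  refine ⟨?_, ?_, ?_⟩
  · rw [Matrix.det_fin_two_of, hdiv]
    linear_combination hFarey + a₂ * hc
  · show (q:ℤ) ∣ a₂ * q
    exact dvd_mul_left _ _
  · simp only [hdiv, Matrix.mul_apply, Fin.sum_univ_two, Matrix.map_apply, Matrix.cons_val',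
      Matrix.cons_val_zero, Matrix.cons_val_one, Matrix.head_cons, Matrix.empty_val', Matrix.of_apply,
      Matrix.cons_val_fin_one, Matrix.head_fin_const, Int.cast_mul, Int.cast_sub,
      Int.cast_natCast, mul_zero, zero_add, add_zero]
    constructor
    · have hs0 : s ≠ 0 := hs.ne'
      field_simp
      linear_combination (a₂:ℝ)*hs2
    · have hsb : s * (b₁:ℝ) ≠ 0 := mul_ne_zero hs.ne' hb₁R
      have hnum : (c:ℝ) * s * ((a₁:ℝ)/b₁) + (-(((a₂:ℝ)*v - a₁) * s⁻¹)) = (-v) / (s * b₁) := by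
        field_simp
        linear_combination ((c:ℝ)*a₁)*hs2 - (a₁:ℝ)*hcR - (v:ℝ)*hF
      have hden : (b₂:ℝ) * s * ((a₁:ℝ)/b₁) + (-(((a₂:ℝ)*q) * s⁻¹)) = (-q) / (s * b₁) := by
        field_simp
        linear_combination ((b₂:ℝ)*a₁)*hs2 - (q:ℝ)*hF
      simp
      rw [hnum, hden, div_div_div_eq]
      have hqne : (q:ℝ) ≠ 0 := hqR.ne'
      field_simp
end
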